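/- There is no strongly connected digraph on at most 6 vertices with no directed cycle of length 2 or 3 in which every vertex has out-degree at least 2. -/

import Mathlib

open scoped Classical

noncomputable section

/-- `D` has a directed cycle of length `ℓ`: `ℓ` distinct vertices cyclically joined by arcs. -/
def HasDicycle {V : Type*} (A : V → V → Prop) (ℓ : ℕ) : Prop :=
  ∃ c : ZMod ℓ → V, Function.Injective c ∧ ∀ i, A (c i) (c (i + 1))

/-- Strong connectivity: every vertex reachable from every vertex. -/
def Strong {V : Type*} (A : V → V → Prop) : Prop :=
  ∀ u v : V, Relation.ReflTransGen A u v

def outDeg {V : Type*} [Fintype V] (A : V → V → Prop) (v : V) : ℕ :=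
  (Finset.univ.filter fun u => A v u).card

def inDeg {V : Type*} [Fintype V] (A : V → V → Prop) (v : V) : ℕ :=
  (Finset.univ.filter fun u => A u v).card

def arcs {V : Type*} [Fintype V] (A : V → V → Prop) : ℕ :=
  (Finset.univ.filter fun p : V × V => A p.1 p.2).card

lemma my_asym {V : Type*} {A : V → V → Prop} (hirr : ∀ v, ¬ A v v)
    (h2 : ¬ HasDicycle A 2) {u v : V} (huv : A u v) (hvu : A v u) : False := by
  rcases eq_or_ne u v with rfl | hne
  · exact hirr u huv
  apply h2
  refine ⟨fun i => if i = 0 then u else v, ?_, ?_⟩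
  · intro i j hij
    have h01 : ∀ k : ZMod 2, k = 0 ∨ k = 1 := by decide
    rcases h01 i with rfl | rfl <;> rcases h01 j with rfl | rfl <;> simp_all
  · intro i
    have h01 : ∀ k : ZMod 2, k = 0 ∨ k = 1 := by decide
    rcases h01 i with rfl | rfl <;> simp_all [show ((1:ZMod 2)+1)=0 by decide]

lemma my_tri {V : Type*} {A : V → V → Prop} (hirr : ∀ v, ¬ A v v)
    (h2 : ¬ HasDicycle A 2) (h3 : ¬ HasDicycle A 3) {u v w : V}
    (huv : A u v) (hvw : A v w) (hwu : A w u) : False := by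
  have h1 : u ≠ v := fun h => hirr u (h ▸ huv)
  have h2' : v ≠ w := fun h => hirr v (h ▸ hvw)
  have h4 : u ≠ w := fun h => my_asym hirr h2 huv (h ▸ hvw)
  apply h3
  refine ⟨fun i => if i = 0 then u else if i = 1 then v else w, ?_, ?_⟩
  · intro i j
    fin_cases i <;> fin_cases j <;> intro hij
    · rfl
    · exact absurd hij h1
    · exact absurd hij h4
    · exact absurd hij.symm h1
    · rfl
    · exact absurd hij h2'
    · exact absurd hij.symm h4
    · exact absurd hij.symm h2'
    · rfl
  · intro i
    fin_cases i
    · exact huv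
    · exact hvw
    · exact hwu

open Finset in
lemma my_key {V : Type*} [Fintype V] {A : V → V → Prop} (hirr : ∀ v, ¬ A v v)
    (h2 : ¬ HasDicycle A 2) (h3 : ¬ HasDicycle A 3) {u v : V} (huv : A u v) :
    (({u, v} : Finset V) ∪ univ.filter (fun x => A v x) ∪ univ.filter (fun x => A x u)).card
      = 2 + outDeg A v + inDeg A u := by
  have hne : u ≠ v := fun h => hirr u (h ▸ huv)
  have d1 : Disjoint ({u, v} : Finset V) (univ.filter (fun x => A v x)) := by
    rw [Finset.disjoint_left]
    intro x hx hx'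
    have hAvx : A v x := (mem_filter.mp hx').2
    rcases mem_insert.mp hx with rfl | hx
    · exact my_asym hirr h2 huv hAvx
    · exact hirr v (mem_singleton.mp hx ▸ hAvx)
  have d2 : Disjoint (({u, v} : Finset V) ∪ univ.filter (fun x => A v x))
      (univ.filter (fun x => A x u)) := by
    rw [Finset.disjoint_left]
    intro x hx hx'
    have hAxu : A x u := (mem_filter.mp hx').2
    rcases mem_union.mp hx with hx | hx
    · rcases mem_insert.mp hx with rfl | hx
      · exact hirr _ hAxu
      · exact my_asym hirr h2 huv (mem_singleton.mp hx ▸ hAxu)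
    · exact my_tri hirr h2 h3 huv (mem_filter.mp hx).2 hAxu
  rw [Finset.card_union_of_disjoint d2, Finset.card_union_of_disjoint d1,
    Finset.card_insert_of_notMem (by simp [hne]), Finset.card_singleton]
  rfl

open Finset in
theorem stmt9 {V : Type*} [Fintype V] [Nonempty V]
    (hcard : Fintype.card V ≤ 6) (A : V → V → Prop)
    (hirr : ∀ v, ¬ A v v) (hstrong : Strong A)
    (h2 : ¬ HasDicycle A 2) (h3 : ¬ HasDicycle A 3)
    (hout : ∀ v, 2 ≤ outDeg A v) : False := by
  classical
  set n := Fintype.card V with hn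
  have hn1 : 1 ≤ n := Fintype.card_pos
  -- every vertex has an out-neighbor
  have hsucc : ∀ u : V, ∃ v, A u v := by
    intro u
    have h := hout u
    unfold outDeg at h
    obtain ⟨v, hv⟩ := Finset.card_pos.mp (by omega : 0 < (univ.filter fun x => A u x).card)
    exact ⟨v, (mem_filter.mp hv).2⟩
  -- key cardinality bound for every arc
  have keyle : ∀ u v : V, A u v → 2 + outDeg A v + inDeg A u ≤ 6 := by
    intro u v huv
    calc 2 + outDeg A v + inDeg A u
        = (({u, v} : Finset V) ∪ univ.filter (fun x => A v x)
            ∪ univ.filter (fun x => A x u)).card := (my_key hirr h2 h3 huv).symm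
      _ ≤ n := Finset.card_le_univ _
      _ ≤ 6 := hcard
  -- in-degrees are at most 2
  have hin2 : ∀ u : V, inDeg A u ≤ 2 := by
    intro u
    obtain ⟨v, huv⟩ := hsucc u
    have := keyle u v huv
    have := hout v
    omega
  -- double counting
  have hsum : ∑ v : V, outDeg A v = ∑ v : V, inDeg A v := by
    unfold outDeg inDeg
    simp only [Finset.card_filter]
    exact Finset.sum_comm
  have hlow : 2 * n ≤ ∑ v : V, outDeg A v := by
    have := Finset.card_nsmul_le_sum univ (outDeg A) 2 (fun v _ => hout v)
    simpa [hn, mul_comm] using this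
  have hhigh : ∑ v : V, inDeg A v ≤ 2 * n := by
    have := Finset.sum_le_card_nsmul univ (inDeg A) 2 (fun v _ => hin2 v)
    simpa [hn, mul_comm] using this
  have htot : ∑ v : V, outDeg A v = 2 * n := by omega
  have htot' : ∑ v : V, inDeg A v = 2 * n := by omega
  -- all degrees are exactly 2
  have hout2 : ∀ v : V, outDeg A v = 2 := by
    intro v
    have he : outDeg A v + ∑ u ∈ univ.erase v, outDeg A u = ∑ u : V, outDeg A u :=
      Finset.add_sum_erase _ _ (mem_univ v)
    have hc : (univ.erase v).card = n - 1 := by simp [hn]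
    have hb : 2 * (n - 1) ≤ ∑ u ∈ univ.erase v, outDeg A u := by
      have := Finset.card_nsmul_le_sum (univ.erase v) (outDeg A) 2 (fun u _ => hout u)
      simpa [hc, mul_comm] using this
    have := hout v
    omega
  have hin2' : ∀ v : V, inDeg A v = 2 := by
    intro v
    have he : inDeg A v + ∑ u ∈ univ.erase v, inDeg A u = ∑ u : V, inDeg A u :=
      Finset.add_sum_erase _ _ (mem_univ v)
    have hc : (univ.erase v).card = n - 1 := by simp [hn]
    have hb : ∑ u ∈ univ.erase v, inDeg A u ≤ 2 * (n - 1) := by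
      have := Finset.sum_le_card_nsmul (univ.erase v) (inDeg A) 2 (fun u _ => hin2 u)
      simpa [hc, mul_comm] using this
    have := hin2 v
    omega
  -- for every arc, the three sets cover everything
  have full : ∀ u v : V, A u v → ∀ z : V, z = u ∨ z = v ∨ A v z ∨ A z u := by
    intro u v huv z
    have hk := my_key hirr h2 h3 huv
    rw [hout2 v, hin2' u] at hk
    have hle : (({u, v} : Finset V) ∪ univ.filter (fun x => A v x)
        ∪ univ.filter (fun x => A x u)).card ≤ n := Finset.card_le_univ _
    have heq : (({u, v} : Finset V) ∪ univ.filter (fun x => A v x)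
        ∪ univ.filter (fun x => A x u)) = univ := by
      apply Finset.eq_univ_of_card
      omega
    have hz : z ∈ (({u, v} : Finset V) ∪ univ.filter (fun x => A v x)
        ∪ univ.filter (fun x => A x u)) := by rw [heq]; exact mem_univ z
    simp only [mem_union, mem_insert, mem_singleton, mem_filter, mem_univ, true_and] at hz
    tauto
  -- final contradiction
  obtain ⟨u⟩ := ‹Nonempty V›
  obtain ⟨v, huv⟩ := hsucc u
  obtain ⟨a, ha, b, hb, hab⟩ := Finset.one_lt_card.mp
    (by have := hout v; unfold outDeg at this; omega : 1 < (univ.filter fun x => A v x).card)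
  have hva : A v a := (mem_filter.mp ha).2
  have hvb : A v b := (mem_filter.mp hb).2
  have hAab : A a b := by
    rcases full v a hva b with h | h | h | h
    · exact absurd (h ▸ hvb) (hirr v)
    · exact absurd h (Ne.symm hab)
    · exact h
    · exact absurd (my_asym hirr h2 hvb h) id
  have hAba : A b a := by
    rcases full v b hvb a with h | h | h | h
    · exact absurd (h ▸ hva) (hirr v)
    · exact absurd h hab
    · exact h
    · exact absurd (my_asym hirr h2 hva h) id
  exact my_asym hirr h2 hAab hAba
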